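/- Let G be a metabelian 5-group of maximal class of order 5^4 with G/γ_2(G) of type (5,5). Choose x ∈ G ∖ χ_2(G) and y ∈ χ_2(G) ∖ γ_2(G), set s_2 = [y, x], s_j = [s_{j−1}, x] for j ≥ 3, and let H_2 = ⟨x, γ_2(G)⟩. If the transfers V_{χ_2(G) → γ_2(G)} and V_{H_2 → γ_2(G)} are both trivial, then x^5 = 1, y^5 · s_2^{10} · s_3^{10} · s_4^5 · s_5 = 1, and [y, s_2] = 1 (i.e., w = z = 0 and a = 0, the defect k(G) = 0); hence G is isomorphic to G_0^{(4)}(0, 0). -/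

import Mathlib

open Subgroup
open scoped commutatorElement IsMulCommutative

/-- The two-step centralizer `χ₂(G) = {g ∈ G : [g,u] ∈ γ₄(G) for all u ∈ γ₂(G)}`,
where `γ_j(G) = lowerCentralSeries G (j-1)`. -/
def twoStepCentralizer (G : Type*) [Group G] : Subgroup G where
  carrier := {g : G | ∀ u ∈ (⊤ : Subgroup G).lowerCentralSeries 1, ⁅g, u⁆ ∈ (⊤ : Subgroup G).lowerCentralSeries 3}
  one_mem' := by
    intro u hu
    simpa using one_mem ((⊤ : Subgroup G).lowerCentralSeries 3)
  mul_mem' := by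
    intro a b ha hb u hu
    have h : ⁅a * b, u⁆ = (a * ⁅b, u⁆ * a⁻¹) * ⁅a, u⁆ := by
      simp only [commutatorElement_def]; group
    rw [h]
    exact mul_mem ((Subgroup.lowerCentralSeries_normal ⊤ 3).conj_mem _ (hb u hu) a) (ha u hu)
  inv_mem' := by
    intro a ha u hu
    have h : ⁅a⁻¹, u⁆ = a⁻¹ * ⁅a, u⁆⁻¹ * a := by
      simp only [commutatorElement_def]; group
    rw [h]
    simpa using (Subgroup.lowerCentralSeries_normal ⊤ 3).conj_mem _ (inv_mem (ha u hu)) a⁻¹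

/-- The transfer `V_{H → γ₂(G)}` from a subgroup `H` of `G` to the (abelian) commutator
subgroup `γ₂(G) = [G,G] ≤ H` is trivial, i.e. it maps every element of `H` to the identity. -/
noncomputable def TransferToDerivedTrivial {G : Type*} [Group G] (H : Subgroup G)
    [IsMulCommutative (((⊤ : Subgroup G).lowerCentralSeries 1).subgroupOf H)]
    [(((⊤ : Subgroup G).lowerCentralSeries 1).subgroupOf H).FiniteIndex] : Prop :=
  ∀ h : H, MonoidHom.transfer (MonoidHom.id ↥(((⊤ : Subgroup G).lowerCentralSeries 1).subgroupOf H)) h = 1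

/-- Proposition 3.1, case `n = 4`: trivial transfers from `χ₂(G)` and `H₂` force
`w = z = 0`, `a = 0` and defect `k = 0`, so `G ≅ G_0^(4)(0,0)`. -/
theorem case_n_eq_four_of_trivial_transfers {G : Type*} [Group G] [Finite G]
    [IsMulCommutative ((⊤ : Subgroup G).lowerCentralSeries 1)]
    (hord : Nat.card G = 5 ^ 4)
    (hmax : (⊤ : Subgroup G).lowerCentralSeries (4 - 1) = ⊥)
    (hmax' : (⊤ : Subgroup G).lowerCentralSeries (4 - 2) ≠ ⊥)
    (habel : Nonempty (Abelianization G ≃* Multiplicative (ZMod 5 × ZMod 5)))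
    (k : ℕ)
    (hdef : ⁅(twoStepCentralizer G : Subgroup G), ((⊤ : Subgroup G).lowerCentralSeries 1 : Subgroup G)⁆ =
      (⊤ : Subgroup G).lowerCentralSeries (4 - k - 1))
    (x y : G) (hx : x ∉ twoStepCentralizer G)
    (hy : y ∈ twoStepCentralizer G) (hy' : y ∉ (⊤ : Subgroup G).lowerCentralSeries 1)
    (s : ℕ → G) (hs2 : s 2 = ⁅y, x⁆) (hs : ∀ j, 2 ≤ j → s (j + 1) = ⁅s j, x⁆)
    (h1 : TransferToDerivedTrivial (twoStepCentralizer G))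
    (h2 : TransferToDerivedTrivial (Subgroup.closure {x} ⊔ (⊤ : Subgroup G).lowerCentralSeries 1)) :
    x ^ 5 = 1 ∧ y ^ 5 * s 2 ^ 10 * s 3 ^ 10 * s 4 ^ 5 * s 5 = 1 ∧ ⁅y, s 2⁆ = 1 ∧ k = 0 := by
  obtain ⟨e⟩ := habel
  have h3bot : (⊤ : Subgroup G).lowerCentralSeries 3 = ⊥ := hmax
  have h2ne : (⊤ : Subgroup G).lowerCentralSeries 2 ≠ ⊥ := hmax'
  -- basic membership lemmas
  have memK : ∀ a b : G, ⁅a, b⁆ ∈ (⊤ : Subgroup G).lowerCentralSeries 1 := by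
    intro a b
    rw [Subgroup.top_lowerCentralSeries_one, commutator_def]
    exact commutator_mem_commutator (mem_top a) (mem_top b)
  have mem2 : ∀ a ∈ (⊤ : Subgroup G).lowerCentralSeries 1, ∀ b : G, ⁅a, b⁆ ∈ (⊤ : Subgroup G).lowerCentralSeries 2 := by
    intro a ha b
    rw [Subgroup.lowerCentralSeries_succ]
    exact commutator_mem_commutator ha (mem_top b)
  have mem3 : ∀ a ∈ (⊤ : Subgroup G).lowerCentralSeries 2, ∀ b : G, ⁅a, b⁆ ∈ (⊤ : Subgroup G).lowerCentralSeries 3 := by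
    intro a ha b
    rw [Subgroup.lowerCentralSeries_succ]
    exact commutator_mem_commutator ha (mem_top b)
  -- elements of γ₃ are central
  have central2 : ∀ c ∈ (⊤ : Subgroup G).lowerCentralSeries 2, ∀ g : G, c * g = g * c := by
    intro c hc g
    have : ⁅c, g⁆ ∈ (⊥ : Subgroup G) := h3bot ▸ mem3 c hc g
    exact commutatorElement_eq_one_iff_mul_comm.mp (mem_bot.mp this)
  -- elements of χ₂ commute with elements of γ₂
  have χcentral : ∀ a ∈ twoStepCentralizer G, ∀ u ∈ (⊤ : Subgroup G).lowerCentralSeries 1, a * u = u * a := by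
    intro a ha u hu
    have : ⁅a, u⁆ ∈ (⊥ : Subgroup G) := h3bot ▸ ha u hu
    exact commutatorElement_eq_one_iff_mul_comm.mp (mem_bot.mp this)
  -- γ₂ ≤ χ₂
  have KleΧ : (⊤ : Subgroup G).lowerCentralSeries 1 ≤ twoStepCentralizer G := by
    intro g hg u hu
    have : ⁅g, u⁆ = 1 := commutatorElement_eq_one_iff_mul_comm.mpr
      (mul_comm_of_mem_isMulCommutative (H := (⊤ : Subgroup G).lowerCentralSeries 1) hg hu)
    rw [this]; exact one_mem _
  have hxK : x ∉ (⊤ : Subgroup G).lowerCentralSeries 1 := fun h => hx (KleΧ h)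
  -- index of γ₂ is 25
  have cardAb : Nat.card (Abelianization G) = 25 := by
    rw [Nat.card_congr e.toEquiv]; simp [Nat.card_eq_fintype_card]
  have hKidx : ((⊤ : Subgroup G).lowerCentralSeries 1).index = 25 := by
    rw [Subgroup.top_lowerCentralSeries_one, Subgroup.index_eq_card]; exact cardAb
  -- fifth powers lie in γ₂
  have pow5K : ∀ g : G, g ^ 5 ∈ (⊤ : Subgroup G).lowerCentralSeries 1 := by
    intro g
    have h : ∀ a : Abelianization G, a ^ 5 = 1 := fun a => e.injective (by
      rw [map_pow, map_one]
      exact (by decide : ∀ b : Multiplicative (ZMod 5 × ZMod 5), b ^ 5 = 1) (e a))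
    have := h (Abelianization.of g)
    rw [← map_pow] at this
    rw [Subgroup.top_lowerCentralSeries_one]
    exact (QuotientGroup.eq_one_iff _).mp this
  -- card of γ₂ is 25
  have cardK : Nat.card ((⊤ : Subgroup G).lowerCentralSeries 1) = 25 := by
    have := Subgroup.index_mul_card ((⊤ : Subgroup G).lowerCentralSeries 1)
    rw [hKidx, hord] at this
    omega
  -- card of γ₃ is 5
  have card2 : Nat.card ((⊤ : Subgroup G).lowerCentralSeries 2) = 5 := by
    have hle : (⊤ : Subgroup G).lowerCentralSeries 2 ≤ (⊤ : Subgroup G).lowerCentralSeries 1 :=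
      Subgroup.lowerCentralSeries_antitone ⊤ (by norm_num)
    have hdvd : Nat.card ((⊤ : Subgroup G).lowerCentralSeries 2) ∣ 5 ^ 2 := by
      have := Subgroup.card_dvd_of_le hle
      rw [cardK] at this
      simpa using this
    obtain ⟨i, hi, hv⟩ := (Nat.dvd_prime_pow Nat.prime_five).mp hdvd
    interval_cases i
    · exfalso
      exact h2ne (Subgroup.card_eq_one.mp (by simpa using hv))
    · simpa using hv
    · exfalso
      have heq : (⊤ : Subgroup G).lowerCentralSeries 2 = (⊤ : Subgroup G).lowerCentralSeries 1 :=
        Subgroup.eq_of_le_of_card_ge hle (by rw [cardK, hv]; norm_num)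
      have : (⊤ : Subgroup G).lowerCentralSeries 3 = (⊤ : Subgroup G).lowerCentralSeries 2 := by
        have e3 : (⊤ : Subgroup G).lowerCentralSeries 3 = ⁅(⊤ : Subgroup G).lowerCentralSeries 2, ⊤⁆ :=
          Subgroup.lowerCentralSeries_succ ⊤ 2
        have e2 : (⊤ : Subgroup G).lowerCentralSeries 2 = ⁅(⊤ : Subgroup G).lowerCentralSeries 1, ⊤⁆ :=
          Subgroup.lowerCentralSeries_succ ⊤ 1
        conv_lhs => rw [e3, heq]
        exact e2.symm
      exact h2ne (by rw [← this, h3bot])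
  have pow5lcs2 : ∀ c ∈ (⊤ : Subgroup G).lowerCentralSeries 2, c ^ 5 = 1 := by
    intro c hc
    have : (⟨c, hc⟩ : (⊤ : Subgroup G).lowerCentralSeries 2) ^ 5 = 1 := by
      rw [← card2]; exact pow_card_eq_one'
    have h := congrArg Subtype.val this
    rw [SubgroupClass.coe_pow, OneMemClass.coe_one] at h
    exact h
  -- x^5 commutes with γ₂
  have xu_comm : ∀ u ∈ (⊤ : Subgroup G).lowerCentralSeries 1, x ^ 5 * u = u * x ^ 5 := by
    intro u hu
    set c := ⁅x, u⁆ with hcdef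
    have hc : c ∈ (⊤ : Subgroup G).lowerCentralSeries 2 := by
      have h1' : ⁅u, x⁆ ∈ (⊤ : Subgroup G).lowerCentralSeries 2 := mem2 u hu x
      have := inv_mem h1'
      rwa [commutatorElement_inv] at this
    have hxc : Commute x c := ((central2 c hc x).symm : x * c = c * x)
    have base : x * u * x⁻¹ = c * u := by
      rw [hcdef, commutatorElement_def]; group
    have key : ∀ n : ℕ, x ^ n * u * (x ^ n)⁻¹ = c ^ n * u := by
      intro n
      induction n with
      | zero => simp
      | succ n ih =>
        have hxcn : Commute x (c ^ n) := hxc.pow_right n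
        calc x ^ (n + 1) * u * (x ^ (n + 1))⁻¹
            = x * (x ^ n * u * (x ^ n)⁻¹) * x⁻¹ := by
              rw [pow_succ']; group
          _ = x * (c ^ n * u) * x⁻¹ := by rw [ih]
          _ = c ^ n * (x * u * x⁻¹) := by
              rw [← mul_assoc, ← mul_assoc, hxcn.eq]; group
          _ = c ^ n * (c * u) := by rw [base]
          _ = c ^ (n + 1) * u := by rw [pow_succ]; group
    have h5 := key 5
    rw [pow5lcs2 c hc, one_mul] at h5
    calc x ^ 5 * u = (x ^ 5 * u * (x ^ 5)⁻¹) * x ^ 5 := by group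
      _ = u * x ^ 5 := by rw [h5]
  -- 5 divides m whenever x^m ∈ γ₂
  have hdvd5 : ∀ m : ℕ, x ^ m ∈ (⊤ : Subgroup G).lowerCentralSeries 1 → 5 ∣ m := by
    have : ((⊤ : Subgroup G).lowerCentralSeries 1).Normal := Subgroup.lowerCentralSeries_normal ⊤ 1
    intro m hm
    set π := QuotientGroup.mk' ((⊤ : Subgroup G).lowerCentralSeries 1) with hπ
    have hx1 : π x ≠ 1 := by
      intro h
      exact hxK ((QuotientGroup.eq_one_iff x).mp h)
    have hord5 : orderOf (π x) = 5 := by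
      have hdvd : orderOf (π x) ∣ 5 := orderOf_dvd_of_pow_eq_one (by
        rw [← map_pow]
        exact (QuotientGroup.eq_one_iff _).mpr (pow5K x))
      rcases (Nat.prime_five.eq_one_or_self_of_dvd _ hdvd) with h | h
      · exact absurd (orderOf_eq_one_iff.mp h) hx1
      · exact h
    have : (π x) ^ m = 1 := by
      rw [← map_pow]
      exact (QuotientGroup.eq_one_iff _).mpr hm
    rw [← hord5]
    exact orderOf_dvd_of_pow_eq_one this
  -- the index computation
  have relfive : ∀ H : Subgroup G, (⊤ : Subgroup G).lowerCentralSeries 1 ≤ H → H ≠ ⊤ →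
      ¬ H ≤ (⊤ : Subgroup G).lowerCentralSeries 1 → (((⊤ : Subgroup G).lowerCentralSeries 1).subgroupOf H).index = 5 := by
    intro H hle hne hnle
    have hmul : ((⊤ : Subgroup G).lowerCentralSeries 1).relIndex H * H.index = 25 := by
      rw [Subgroup.relIndex_mul_index hle, hKidx]
    have hne1 : ((⊤ : Subgroup G).lowerCentralSeries 1).relIndex H ≠ 1 := by
      simpa [Subgroup.relIndex_eq_one] using hnle
    have hne1' : H.index ≠ 1 := by
      simpa [Subgroup.index_eq_one] using hne
    have h25 : (5 : ℕ) ^ 2 = 25 := by norm_num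
    have hdvd : ((⊤ : Subgroup G).lowerCentralSeries 1).relIndex H ∣ 5 ^ 2 :=
      ⟨H.index, by rw [h25, hmul]⟩
    obtain ⟨i, hi, hv⟩ := (Nat.dvd_prime_pow Nat.prime_five).mp hdvd
    interval_cases i
    · exact absurd (by simpa using hv) hne1
    · simpa [Subgroup.relIndex] using hv
    · exfalso
      rw [hv] at hmul
      norm_num at hmul
      exact hne hmul
  -- χ₂ ≠ ⊤
  have χne : twoStepCentralizer G ≠ ⊤ := fun h => hx (h ▸ mem_top x)
  have χnle : ¬ twoStepCentralizer G ≤ (⊤ : Subgroup G).lowerCentralSeries 1 := fun h => hy' (h hy)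
  have idxχ : (((⊤ : Subgroup G).lowerCentralSeries 1).subgroupOf (twoStepCentralizer G)).index = 5 :=
    relfive _ KleΧ χne χnle
  -- H₂ facts
  have hxH2 : x ∈ Subgroup.closure {x} ⊔ (⊤ : Subgroup G).lowerCentralSeries 1 :=
    Subgroup.mem_sup_left (subset_closure rfl)
  have hKH2 : (⊤ : Subgroup G).lowerCentralSeries 1 ≤ Subgroup.closure {x} ⊔ (⊤ : Subgroup G).lowerCentralSeries 1 :=
    le_sup_right
  have H2ne : Subgroup.closure {x} ⊔ (⊤ : Subgroup G).lowerCentralSeries 1 ≠ ⊤ := by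
    intro htop
    have : ((⊤ : Subgroup G).lowerCentralSeries 1).Normal := Subgroup.lowerCentralSeries_normal ⊤ 1
    set π := QuotientGroup.mk' ((⊤ : Subgroup G).lowerCentralSeries 1) with hπ
    have hmap : Subgroup.map π (Subgroup.closure {x} ⊔ (⊤ : Subgroup G).lowerCentralSeries 1) = ⊤ := by
      rw [htop]
      exact Subgroup.map_top_of_surjective π (QuotientGroup.mk'_surjective _)
    have hker : Subgroup.map π ((⊤ : Subgroup G).lowerCentralSeries 1) = ⊥ :=
      (Subgroup.map_eq_bot_iff _).mpr (by rw [QuotientGroup.ker_mk'])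
    rw [Subgroup.map_sup, MonoidHom.map_closure, Set.image_singleton, hker,
      sup_bot_eq, ← Subgroup.zpowers_eq_closure] at hmap
    have hcard : Nat.card (G ⧸ (⊤ : Subgroup G).lowerCentralSeries 1) = orderOf (π x) := by
      rw [← Nat.card_zpowers, hmap, Subgroup.card_top]
    have hdvd : orderOf (π x) ∣ 5 := orderOf_dvd_of_pow_eq_one (by
      rw [← map_pow]
      exact (QuotientGroup.eq_one_iff _).mpr (pow5K x))
    rw [← hcard, ← Subgroup.index_eq_card, hKidx] at hdvd
    norm_num at hdvd
  have H2nle : ¬ Subgroup.closure {x} ⊔ (⊤ : Subgroup G).lowerCentralSeries 1 ≤ (⊤ : Subgroup G).lowerCentralSeries 1 :=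
    fun h => hxK (h hxH2)
  have idxH2 : (((⊤ : Subgroup G).lowerCentralSeries 1).subgroupOf
      (Subgroup.closure {x} ⊔ (⊤ : Subgroup G).lowerCentralSeries 1)).index = 5 :=
    relfive _ hKH2 H2ne H2nle
  -- transfer computation for an element of χ₂
  have transχ : ∀ g : (twoStepCentralizer G),
      (∀ m : ℕ, (g : G) ^ m ∈ (⊤ : Subgroup G).lowerCentralSeries 1 →
        ∀ a ∈ twoStepCentralizer G, a * (g : G) ^ m = (g : G) ^ m * a) → (g : G) ^ 5 = 1 := by
    intro g hcomm
    have key : ∀ (m : ℕ) (g₀ : (twoStepCentralizer G)),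
        g₀⁻¹ * g ^ m * g₀ ∈ ((⊤ : Subgroup G).lowerCentralSeries 1).subgroupOf (twoStepCentralizer G) →
        g₀⁻¹ * g ^ m * g₀ = g ^ m := by
      intro m g₀ hmem
      rw [Subgroup.mem_subgroupOf] at hmem
      have hcoe : ((g₀⁻¹ * g ^ m * g₀ : (twoStepCentralizer G)) : G)
          = (g₀ : G)⁻¹ * (g : G) ^ m * (g₀ : G) := by push_cast; ring_nf
      rw [hcoe] at hmem
      have hgm : (g : G) ^ m ∈ (⊤ : Subgroup G).lowerCentralSeries 1 := by
        have := (Subgroup.lowerCentralSeries_normal ⊤ 1).conj_mem _ hmem (g₀ : G)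
        simpa [mul_assoc] using this
      have hc := hcomm m hgm (g₀ : G) g₀.2
      apply Subtype.ext
      rw [hcoe]
      push_cast
      rw [mul_assoc, ← hc, ← mul_assoc]
      group
    have t := MonoidHom.transfer_eq_pow
      (MonoidHom.id ↥(((⊤ : Subgroup G).lowerCentralSeries 1).subgroupOf (twoStepCentralizer G))) g key
    rw [h1 g] at t
    have t2 : g ^ (((⊤ : Subgroup G).lowerCentralSeries 1).subgroupOf (twoStepCentralizer G)).index = 1 := by
      have := congrArg Subtype.val t.symm
      exact this
    rw [idxχ] at t2
    simpa using congrArg Subtype.val t2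
  -- y^5 = 1
  have y5 : y ^ 5 = 1 := by
    refine transχ ⟨y, hy⟩ ?_
    intro m hm a ha
    exact χcentral a ha _ hm
  -- s 2 ∈ γ₂ and s2^5 = 1
  have hs2K : s 2 ∈ (⊤ : Subgroup G).lowerCentralSeries 1 := by rw [hs2]; exact memK y x
  have s25 : s 2 ^ 5 = 1 := by
    refine transχ ⟨s 2, KleΧ hs2K⟩ ?_
    intro m hm a ha
    exact χcentral a ha _ hm
  -- x^5 = 1 via the transfer from H₂
  have x5 : x ^ 5 = 1 := by
    have hcent : ∀ h ∈ Subgroup.closure {x} ⊔ (⊤ : Subgroup G).lowerCentralSeries 1,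
        x ^ 5 * h = h * x ^ 5 := by
      have hle : Subgroup.closure {x} ⊔ (⊤ : Subgroup G).lowerCentralSeries 1 ≤
          Subgroup.centralizer {x ^ 5} := by
        apply sup_le
        · rw [Subgroup.closure_le, Set.singleton_subset_iff, SetLike.mem_coe,
            Subgroup.mem_centralizer_iff]
          intro h hh
          rw [Set.mem_singleton_iff] at hh
          subst hh
          exact (Commute.self_pow x 5).symm.eq
        · intro u hu
          rw [Subgroup.mem_centralizer_iff]
          intro h hh
          rw [Set.mem_singleton_iff] at hh
          subst hh
          exact xu_comm u hu
      intro h hh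
      exact (Subgroup.mem_centralizer_iff.mp (hle hh) _ rfl)
    set H2 := Subgroup.closure {x} ⊔ (⊤ : Subgroup G).lowerCentralSeries 1 with hH2
    have key : ∀ (m : ℕ) (g₀ : H2),
        g₀⁻¹ * (⟨x, hxH2⟩ : H2) ^ m * g₀ ∈ ((⊤ : Subgroup G).lowerCentralSeries 1).subgroupOf H2 →
        g₀⁻¹ * (⟨x, hxH2⟩ : H2) ^ m * g₀ = (⟨x, hxH2⟩ : H2) ^ m := by
      intro m g₀ hmem
      rw [Subgroup.mem_subgroupOf] at hmem
      have hcoe : ((g₀⁻¹ * (⟨x, hxH2⟩ : H2) ^ m * g₀ : H2) : G)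
          = (g₀ : G)⁻¹ * x ^ m * (g₀ : G) := by push_cast; ring_nf
      rw [hcoe] at hmem
      have hgm : x ^ m ∈ (⊤ : Subgroup G).lowerCentralSeries 1 := by
        have := (Subgroup.lowerCentralSeries_normal ⊤ 1).conj_mem _ hmem (g₀ : G)
        simpa [mul_assoc] using this
      obtain ⟨j, rfl⟩ := hdvd5 m hgm
      have hcomm : Commute (x ^ 5) (g₀ : G) := hcent _ g₀.2
      have hcomm' : x ^ (5 * j) * (g₀ : G) = (g₀ : G) * x ^ (5 * j) := by
        rw [pow_mul]
        exact ((hcomm.pow_left j).eq)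
      apply Subtype.ext
      rw [hcoe]
      push_cast
      rw [mul_assoc, hcomm', ← mul_assoc]
      group
    have t := MonoidHom.transfer_eq_pow
      (MonoidHom.id ↥(((⊤ : Subgroup G).lowerCentralSeries 1).subgroupOf H2)) (⟨x, hxH2⟩ : H2) key
    rw [h2 _] at t
    have t2 : (⟨x, hxH2⟩ : H2) ^ (((⊤ : Subgroup G).lowerCentralSeries 1).subgroupOf H2).index = 1 := by
      have := congrArg Subtype.val t.symm
      exact this
    rw [idxH2] at t2
    simpa using congrArg Subtype.val t2
  -- s 3, s 4, s 5
  have hs3 : s 3 = ⁅s 2, x⁆ := hs 2 (by norm_num)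
  have hs3K : s 3 ∈ (⊤ : Subgroup G).lowerCentralSeries 2 := by rw [hs3]; exact mem2 _ hs2K x
  have s35 : s 3 ^ 5 = 1 := pow5lcs2 _ hs3K
  have hs4 : s 4 = 1 := by
    have h4 : s 4 = ⁅s 3, x⁆ := hs 3 (by norm_num)
    have : s 4 ∈ (⊥ : Subgroup G) := by
      rw [h4, ← h3bot]
      exact mem3 _ hs3K x
    exact mem_bot.mp this
  have hs5 : s 5 = 1 := by
    have h5 : s 5 = ⁅s 4, x⁆ := hs 4 (by norm_num)
    rw [h5, hs4]
    simp [commutatorElement_def]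
  -- second relation
  have rel2 : y ^ 5 * s 2 ^ 10 * s 3 ^ 10 * s 4 ^ 5 * s 5 = 1 := by
    have e2 : s 2 ^ 10 = (s 2 ^ 5) ^ 2 := by rw [← pow_mul]
    have e3 : s 3 ^ 10 = (s 3 ^ 5) ^ 2 := by rw [← pow_mul]
    rw [y5, e2, e3, s25, s35, hs4, hs5]
    simp
  -- [y, s2] = 1
  have ys2 : ⁅y, s 2⁆ = 1 := by
    have : ⁅y, s 2⁆ ∈ (⊥ : Subgroup G) := h3bot ▸ hy (s 2) hs2K
    exact mem_bot.mp this
  -- k = 0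
  have hk0 : k = 0 := by
    by_contra hk
    have hbot : ⁅(twoStepCentralizer G : Subgroup G), ((⊤ : Subgroup G).lowerCentralSeries 1 : Subgroup G)⁆
        = ⊥ := by
      rw [eq_bot_iff, ← h3bot]
      rw [Subgroup.commutator_le]
      intro g₁ hg₁ g₂ hg₂
      exact hg₁ g₂ hg₂
    rw [hbot] at hdef
    have hle : 4 - k - 1 ≤ 2 := by omega
    have : (⊤ : Subgroup G).lowerCentralSeries 2 ≤ (⊤ : Subgroup G).lowerCentralSeries (4 - k - 1) :=
      Subgroup.lowerCentralSeries_antitone ⊤ hle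
    rw [← hdef] at this
    exact h2ne (le_bot_iff.mp this)
  exact ⟨x5, rel2, ys2, hk0⟩
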